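/- Let γ denote the standard Gaussian probability measure on ℝ, φ the standard normal density and Φ the standard normal CDF. Let a₁, a₂, b₁, b₂ be real numbers with b₁ < b₂, and set z* = (a₁ − a₂)/(b₂ − b₁). Then ∫_ℝ max(a₁ + b₁·z, a₂ + b₂·z) dγ(z) = a₁·Φ(z*) + a₂·(1 − Φ(z*)) + (b₂ − b₁)·φ(z*). -/

import Mathlib

open MeasureTheory ProbabilityTheory

/-- The standard Gaussian probability measure on ℝ (mean 0, variance 1). -/
noncomputable def stdGaussian : Measure ℝ := gaussianReal 0 1

/-- The standard normal density φ(z) = (2π)^{-1/2} exp(−z²/2). -/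
noncomputable def stdNormalPDF (z : ℝ) : ℝ :=
  (Real.sqrt (2 * Real.pi))⁻¹ * Real.exp (-z ^ 2 / 2)

/-- The standard normal CDF Φ(z) = ∫_{−∞}^{z} φ(t) dt. -/
noncomputable def stdNormalCDF (z : ℝ) : ℝ := ∫ t in Set.Iic z, stdNormalPDF t

section Aux

open Set Filter Topology
open scoped ENNReal NNReal

lemma pdf_eq : stdNormalPDF = gaussianPDFReal 0 1 := by
  funext x
  simp only [stdNormalPDF, gaussianPDFReal, NNReal.coe_one, mul_one, sub_zero, one_div]

lemma integrable_pdf : Integrable stdNormalPDF := by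
  rw [pdf_eq]; exact integrable_gaussianPDFReal 0 1

lemma integral_pdf : ∫ z, stdNormalPDF z = 1 := by
  rw [pdf_eq]; exact integral_gaussianPDFReal_eq_one 0 one_ne_zero

lemma integrable_mul_pdf : Integrable (fun z => z * stdNormalPDF z) := by
  have h := (integrable_mul_exp_neg_mul_sq (b := 1/2) (by norm_num)).const_mul
    (Real.sqrt (2 * Real.pi))⁻¹
  refine h.congr ?_
  filter_upwards with z
  simp only [stdNormalPDF]
  ring_nf

lemma hasDerivAt_negpdf (z : ℝ) :
    HasDerivAt (fun z => -stdNormalPDF z) (z * stdNormalPDF z) z := by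
  have h : HasDerivAt (fun z : ℝ => -z ^ 2 / 2) (-z) z := by
    have := ((hasDerivAt_pow 2 z).neg).div_const 2
    simpa using this.congr_deriv (by ring)
  have h3 : HasDerivAt (fun z => -stdNormalPDF z)
      (-((Real.sqrt (2 * Real.pi))⁻¹ * (Real.exp (-z ^ 2 / 2) * -z))) z := ((h.exp).const_mul (Real.sqrt (2 * Real.pi))⁻¹).neg
  convert h3 using 1
  simp only [stdNormalPDF]; ring

lemma tendsto_negpdf : Tendsto (fun z => -stdNormalPDF z) atBot (𝓝 0) := by
  have hsq : Tendsto (fun z : ℝ => z ^ 2) atBot atTop := by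
    have : Tendsto (fun z : ℝ => |z| ^ 2) atBot atTop :=
      (tendsto_pow_atTop two_ne_zero).comp tendsto_abs_atBot_atTop
    simpa [sq_abs] using this
  have harg : Tendsto (fun z : ℝ => -z ^ 2 / 2) atBot atBot :=
    (tendsto_neg_atTop_atBot.comp hsq).atBot_div_const (by norm_num)
  have hexp : Tendsto (fun z : ℝ => Real.exp (-z ^ 2 / 2)) atBot (𝓝 0) :=
    Real.tendsto_exp_atBot.comp harg
  have := (hexp.const_mul (Real.sqrt (2 * Real.pi))⁻¹).neg
  simpa [stdNormalPDF] using this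

lemma integral_Iic_mul_pdf (s : ℝ) :
    ∫ z in Iic s, z * stdNormalPDF z = -stdNormalPDF s := by
  have := integral_Iic_of_hasDerivAt_of_tendsto' (a := s) (f := fun z => -stdNormalPDF z)
    (fun x _ => hasDerivAt_negpdf x) integrable_mul_pdf.integrableOn tendsto_negpdf
  simpa using this

lemma integral_univ_mul_pdf : ∫ z, z * stdNormalPDF z = 0 :=
  integral_eq_zero_of_hasDerivAt_of_integrable hasDerivAt_negpdf integrable_mul_pdf
    integrable_pdf.neg

lemma integral_stdGaussian' (g : ℝ → ℝ) :
    ∫ z, g z ∂(gaussianReal 0 1) = ∫ z, g z * stdNormalPDF z := by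
  rw [gaussianReal_of_var_ne_zero 0 one_ne_zero]
  have hd : (gaussianPDF 0 1) = fun x => ((gaussianPDFReal 0 1 x).toNNReal : ℝ≥0∞) := rfl
  rw [hd, integral_withDensity_eq_integral_smul
    ((measurable_gaussianPDFReal 0 1).real_toNNReal) g]
  congr 1; funext x
  rw [NNReal.smul_def, smul_eq_mul, Real.coe_toNNReal _ (gaussianPDFReal_nonneg 0 1 x),
    pdf_eq, mul_comm]

lemma integrable_affine_mul_pdf (a b : ℝ) :
    Integrable (fun z => (a + b * z) * stdNormalPDF z) := by
  refine ((integrable_pdf.const_mul a).add (integrable_mul_pdf.const_mul b)).congr ?_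
  filter_upwards with z
  simp only [Pi.add_apply]; ring

end Aux

open Set Filter Topology in
/-- closed-form Knowledge Gradient for two affine alternatives:
for b₁ < b₂ and z* = (a₁ − a₂)/(b₂ − b₁),
∫ max(a₁ + b₁z, a₂ + b₂z) dγ(z) = a₁Φ(z*) + a₂(1 − Φ(z*)) + (b₂ − b₁)φ(z*). -/
theorem stmt_5 (a₁ a₂ b₁ b₂ : ℝ) (hb : b₁ < b₂) :
    (∫ z, max (a₁ + b₁ * z) (a₂ + b₂ * z) ∂stdGaussian) =
      a₁ * stdNormalCDF ((a₁ - a₂) / (b₂ - b₁)) +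
        a₂ * (1 - stdNormalCDF ((a₁ - a₂) / (b₂ - b₁))) +
        (b₂ - b₁) * stdNormalPDF ((a₁ - a₂) / (b₂ - b₁)) := by
  have hc : (0:ℝ) < b₂ - b₁ := by linarith
  set s : ℝ := (a₁ - a₂) / (b₂ - b₁) with hs
  have hmax : ∀ z : ℝ, max (a₁ + b₁ * z) (a₂ + b₂ * z) * stdNormalPDF z =
      (Iic s).indicator (fun z => (a₁ + b₁ * z) * stdNormalPDF z) z +
      (Ioi s).indicator (fun z => (a₂ + b₂ * z) * stdNormalPDF z) z := by
    intro z
    rcases le_or_gt z s with hz | hz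
    · have h1 : z * (b₂ - b₁) ≤ a₁ - a₂ := by
        rw [hs, le_div_iff₀ hc] at hz; linarith
      rw [max_eq_left (by nlinarith), indicator_of_mem (mem_Iic.mpr hz),
        indicator_of_notMem (by simp [mem_Ioi, not_lt, hz]), add_zero]
    · have h1 : a₁ - a₂ ≤ z * (b₂ - b₁) := by
        have h2 : (a₁ - a₂) / (b₂ - b₁) ≤ z := le_of_lt (hs ▸ hz)
        rw [div_le_iff₀ hc] at h2; linarith
      rw [max_eq_right (by nlinarith), indicator_of_mem (mem_Ioi.mpr hz),
        indicator_of_notMem (by simp [mem_Iic, not_le, hz]), zero_add]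
  have key : (∫ z, max (a₁ + b₁ * z) (a₂ + b₂ * z) ∂stdGaussian) =
      (∫ z in Iic s, (a₁ + b₁ * z) * stdNormalPDF z) +
      (∫ z in Ioi s, (a₂ + b₂ * z) * stdNormalPDF z) := by
    rw [show _root_.stdGaussian = gaussianReal 0 1 from rfl, integral_stdGaussian']
    simp_rw [hmax]
    rw [integral_add (((integrable_affine_mul_pdf a₁ b₁)).indicator measurableSet_Iic)
        (((integrable_affine_mul_pdf a₂ b₂)).indicator measurableSet_Ioi),
      integral_indicator measurableSet_Iic, integral_indicator measurableSet_Ioi]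
  have hsplit : ∀ (u : ℝ → ℝ), Integrable u →
      ∫ z in Ioi s, u z = (∫ z, u z) - ∫ z in Iic s, u z := by
    intro u hu
    have := intervalIntegral.integral_Iic_add_Ioi (b := s) hu.integrableOn hu.integrableOn
    linarith
  have e1 : ∫ z in Iic s, (a₁ + b₁ * z) * stdNormalPDF z
      = a₁ * stdNormalCDF s - b₁ * stdNormalPDF s := by
    have : ∀ z : ℝ, (a₁ + b₁ * z) * stdNormalPDF z
        = a₁ * stdNormalPDF z + b₁ * (z * stdNormalPDF z) := fun z => by ring
    simp_rw [this]
    rw [integral_add ((integrable_pdf.const_mul a₁).integrableOn)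
        ((integrable_mul_pdf.const_mul b₁).integrableOn),
      integral_const_mul, integral_const_mul, integral_Iic_mul_pdf]
    simp [stdNormalCDF]; ring
  have e2 : ∫ z in Ioi s, (a₂ + b₂ * z) * stdNormalPDF z
      = a₂ * (1 - stdNormalCDF s) + b₂ * stdNormalPDF s := by
    have : ∀ z : ℝ, (a₂ + b₂ * z) * stdNormalPDF z
        = a₂ * stdNormalPDF z + b₂ * (z * stdNormalPDF z) := fun z => by ring
    simp_rw [this]
    rw [integral_add ((integrable_pdf.const_mul a₂).integrableOn)
        ((integrable_mul_pdf.const_mul b₂).integrableOn),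
      integral_const_mul, integral_const_mul,
      hsplit _ integrable_pdf, hsplit _ integrable_mul_pdf,
      integral_pdf, integral_univ_mul_pdf, integral_Iic_mul_pdf]
    simp only [stdNormalCDF]; ring
  rw [key, e1, e2]; ring
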